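/- Let ρ ∈ (0,1) and (x_i)_{i∈ℤ} be bounded. Define y_i via the distributed recursion: y_i(0) = ((1-ρ)/(1+ρ)) x_i; y_i(1) = y_i(0) + ρ(y_{i-1}(0) + y_{i+1}(0)); y_i(2) = y_i(1) + ρ(y_{i-1}(1) - y_{i-1}(0)) + ρ(y_{i+1}(1) - y_{i+1}(0)) - 2ρ² y_i(0); and for k ≥ 2, y_i(k+1) = y_i(k) + ρ(y_{i-1}(k) - y_{i-1}(k-1)) + ρ(y_{i+1}(k) - y_{i+1}(k-1)) - ρ²(y_i(k-1) - y_i(k-2)). Then for all k ≥ 1 and all i, y_i(k) = y_i(k-1) + ρ^k (y_{i-k}(0) + y_{i+k}(0)). -/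
import Mathlib


theorem stmt1 (ρ : ℝ) (hρ : ρ ∈ Set.Ioo (0:ℝ) 1)
    (x : ℤ → ℝ) (M : ℝ) (hx : ∀ i, |x i| < M)
    (y : ℤ → ℕ → ℝ)
    (h0 : ∀ i, y i 0 = (1 - ρ) / (1 + ρ) * x i)
    (h1 : ∀ i, y i 1 = y i 0 + ρ * (y (i - 1) 0 + y (i + 1) 0))
    (h2 : ∀ i, y i 2 = y i 1 + ρ * (y (i - 1) 1 - y (i - 1) 0)
      + ρ * (y (i + 1) 1 - y (i + 1) 0) - 2 * ρ ^ 2 * y i 0)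
    (hrec : ∀ i, ∀ k : ℕ, 2 ≤ k →
      y i (k + 1) = y i k + ρ * (y (i - 1) k - y (i - 1) (k - 1))
        + ρ * (y (i + 1) k - y (i + 1) (k - 1))
        - ρ ^ 2 * (y i (k - 1) - y i (k - 2))) :
    ∀ (k : ℕ), 1 ≤ k → ∀ i : ℤ,
      y i k = y i (k - 1) + ρ ^ k * (y (i - k) 0 + y (i + k) 0) := by
  intro k
  induction k using Nat.strong_induction_on with
  | _ k ih =>
    match k with
    | 0 => intro h; omega
    | 1 =>
      intro _ i
      simpa using h1 i
    | 2 =>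
      intro _ i
      have e1 := h1 (i - 1)
      have e2 := h1 (i + 1)
      have e3 := h2 i
      have a1 : i - 1 - 1 = i - (2:ℤ) := by ring
      have a2 : i - 1 + 1 = i := by ring
      have a3 : i + 1 - 1 = i := by ring
      have a4 : i + 1 + 1 = i + (2:ℤ) := by ring
      rw [a1, a2] at e1
      rw [a3, a4] at e2
      rw [e1, e2] at e3
      push_cast
      rw [e3]; ring
    | (n + 3) =>
      intro _ i
      have hr := hrec i (n + 2) (by omega)
      have ih1 := ih (n + 2) (by omega) (by omega) (i - 1)
      have ih2 := ih (n + 2) (by omega) (by omega) (i + 1)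
      have ih3 := ih (n + 1) (by omega) (by omega) i
      simp only [Nat.add_sub_cancel] at ih1 ih2 ih3
      have b1 : i - 1 - ((n : ℤ) + 2) = i - ((n : ℤ) + 3) := by ring
      have b2 : i - 1 + ((n : ℤ) + 2) = i + ((n : ℤ) + 1) := by ring
      have b3 : i + 1 - ((n : ℤ) + 2) = i - ((n : ℤ) + 1) := by ring
      have b4 : i + 1 + ((n : ℤ) + 2) = i + ((n : ℤ) + 3) := by ring
      push_cast at ih1 ih2 ih3 ⊢
      rw [b1, b2] at ih1
      rw [b3, b4] at ih2
      have hk : (n : ℕ) + 3 - 1 = n + 2 := by omega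
      have hk2 : (n : ℕ) + 2 - 1 = n + 1 := by omega
      have hk3 : (n : ℕ) + 2 - 2 = n := by omega
      rw [hk2, hk3] at hr
      rw [show (n : ℕ) + 2 + 1 = n + 3 from rfl] at hr
      rw [hr, ih1, ih2, ih3]
      ring
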